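/- Mixed-sign intersection case: let a ∈ ℝ and let n < m be natural numbers with p = m − n. If ψⁿ(a, a) = ψᵐ(a, −a), then the point w = ψⁿ(a, a) is periodic with period 2p, i.e. ψ²ᵖ(w) = w. -/

import Mathlib

noncomputable def psi : ℝ × ℝ → ℝ × ℝ := fun p => (p.1, p.1 * Real.sin p.2)

lemma psi_fst (a : ℝ) : ∀ (k : ℕ) (y : ℝ), (psi^[k] (a, y)).1 = a := by
  intro k
  induction k with
  | zero => intro y; simp
  | succ k ih =>
    intro y
    rw [Function.iterate_succ_apply']
    simpa [psi] using ih y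

lemma psi_neg (a : ℝ) : ∀ (k : ℕ) (y : ℝ),
    psi^[k] (a, -y) = (a, -(psi^[k] (a, y)).2) := by
  intro k
  induction k with
  | zero => intro y; simp
  | succ k ih =>
    intro y
    rw [Function.iterate_succ_apply', Function.iterate_succ_apply', ih y]
    have h1 := psi_fst a k y
    have : psi^[k] (a, y) = (a, (psi^[k] (a, y)).2) := by
      ext <;> simp [h1]
    rw [this]
    simp [psi, Real.sin_neg]

theorem mixed_sign_periodic (a : ℝ) (n m : ℕ) (hnm : n < m)
    (h : psi^[n] (a, a) = psi^[m] (a, -a)) :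
    psi^[2 * (m - n)] (psi^[n] (a, a)) = psi^[n] (a, a) := by
  set p := m - n with hp
  have hm : m = p + n := by omega
  set w := (psi^[n] (a, a)).2 with hw
  have hwn : psi^[n] (a, a) = (a, w) := by
    ext <;> simp [psi_fst, hw]
  have hmm : psi^[m] (a, -a) = (a, -(psi^[p] (a, w)).2) := by
    rw [psi_neg a m a, hm, Function.iterate_add_apply, hwn]
  have key : psi^[p] (a, w) = (a, -w) := by
    have h2 : w = -(psi^[p] (a, w)).2 := by
      have := h.trans hmm
      rw [hwn] at this
      exact (Prod.mk.injEq _ _ _ _).mp this |>.2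
    ext
    · simp [psi_fst]
    · simp; linarith [h2]
  have : psi^[2 * p] (a, w) = (a, w) := by
    have h2p : 2 * p = p + p := by ring
    rw [h2p, Function.iterate_add_apply, key, psi_neg a p w, key]
    simp
  rw [hwn, this]
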